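/- For every natural number n, the cardinality of O_n equals (2n−1)!! = ∏_{i=1}^{n} (2i−1). -/

import Mathlib

/-- A path in `O_n`: a list of lattice points starting at `(0,0)`, ending at `(n,n)`,
with pairwise distinct points, every point `(x,y)` satisfying `x ≤ y` and `-y ≤ x`,
and each step in `{(1,0), (0,1), (-1,0)}`. -/
def IsOPath (n : ℕ) (v : List (ℤ × ℤ)) : Prop :=
  v.head? = some (0, 0) ∧
  v.getLast? = some ((n : ℤ), (n : ℤ)) ∧
  v.Nodup ∧
  (∀ p ∈ v, p.1 ≤ p.2 ∧ -p.2 ≤ p.1) ∧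
  v.Chain' (fun a b => b - a = (1, 0) ∨ b - a = (0, 1) ∨ b - a = (-1, 0))

namespace OPathAux


def segZ (a b : ℤ) : List ℤ :=
  if a ≤ b then (List.range ((b - a).toNat + 1)).map (fun i : ℕ => a + (i : ℤ))
  else (List.range ((a - b).toNat + 1)).map (fun i : ℕ => a - (i : ℤ))

lemma segZ_ne_nil (a b : ℤ) : segZ a b ≠ [] := by
  unfold segZ; split <;> simp [List.range_succ_eq_map]

lemma head?_segZ (a b : ℤ) : (segZ a b).head? = some a := by
  unfold segZ; split <;> simp [List.range_succ_eq_map]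

lemma getLast?_segZ (a b : ℤ) : (segZ a b).getLast? = some b := by
  unfold segZ; split <;>
  · rw [List.range_succ, List.map_append, List.map_singleton, List.getLast?_concat]
    congr 1; omega

lemma mem_segZ {a b x : ℤ} : x ∈ segZ a b ↔ (a ≤ x ∧ x ≤ b) ∨ (b ≤ x ∧ x ≤ a) := by
  unfold segZ; split <;> rename_i h <;> simp only [List.mem_map, List.mem_range] <;> constructor
  · rintro ⟨i, hi, rfl⟩; omega
  · intro hx; exact ⟨(x - a).toNat, by omega, by omega⟩
  · rintro ⟨i, hi, rfl⟩; omega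
  · intro hx; exact ⟨(a - x).toNat, by omega, by omega⟩

lemma nodup_segZ (a b : ℤ) : (segZ a b).Nodup := by
  unfold segZ; split <;>
    exact List.nodup_range.map (fun x y h => by omega)

lemma chain'_segZ (a b : ℤ) :
    (segZ a b).Chain' (fun s t => t = s + 1 ∨ t = s - 1) := by
  unfold segZ; split <;>
  · rw [List.Chain', List.isChain_map]
    refine (List.isChain_range_succ _ _).mpr ?_
    intro i hi; omega

lemma segZ_self (a : ℤ) : segZ a a = [a] := by
  unfold segZ; simp [List.range_succ_eq_map]

lemma segZ_cons_up {a b : ℤ} (h : a < b) : segZ a b = a :: segZ (a + 1) b := by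
  unfold segZ
  rw [if_pos h.le, if_pos (by omega)]
  have : (b - a).toNat = (b - (a+1)).toNat + 1 := by omega
  rw [this, List.range_succ_eq_map]
  simp [List.map_map, Function.comp]
  intro i hi; omega

lemma segZ_cons_down {a b : ℤ} (h : b < a) : segZ a b = a :: segZ (a - 1) b := by
  unfold segZ
  rw [if_neg (by omega)]
  have : (a - b).toNat = ((a-1) - b).toNat + 1 := by omega
  rw [this, List.range_succ_eq_map]
  by_cases h2 : a - 1 ≤ b
  · have : a - 1 = b := by omega
    rw [if_pos h2]
    simp [List.map_map, Function.comp, ← this]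
  · rw [if_neg h2]
    simp [List.map_map, Function.comp]
    intro i hi; omega


lemma walk_eq_segZ (l : List ℤ) (hc : l.Chain' (fun s t => t = s + 1 ∨ t = s - 1))
    (hn : l.Nodup) : ∀ a, l.head? = some a → ∃ b, l = segZ a b := by
  induction l with
  | nil => intro a h; simp at h
  | cons a0 tl IH =>
    intro a ha
    simp only [List.head?_cons, Option.some_inj] at ha
    subst ha
    match tl, hc, hn with
    | [], _, _ => exact ⟨a0, (segZ_self a0).symm⟩
    | x :: rest, hc, hn =>
      obtain ⟨b, hb⟩ := IH hc.tail hn.of_cons x rfl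
      have hstep : x = a0 + 1 ∨ x = a0 - 1 := (List.isChain_cons_cons.mp hc).1
      have hnotmem : a0 ∉ segZ x b := by rw [← hb]; exact (List.nodup_cons.mp hn).1
      rw [mem_segZ] at hnotmem
      rcases hstep with h | h
      · have hab : a0 < b := by omega
        exact ⟨b, by rw [segZ_cons_up hab, ← h, ← hb]⟩
      · have hab : b < a0 := by omega
        exact ⟨b, by rw [segZ_cons_down hab, ← h, ← hb]⟩

def Step (u w : ℤ × ℤ) : Prop :=
  w - u = (1, 0) ∨ w - u = (0, 1) ∨ w - u = (-1, 0)

lemma step_iff {u w : ℤ × ℤ} : Step u w ↔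
    (w.1 = u.1 + 1 ∧ w.2 = u.2) ∨ (w.1 = u.1 ∧ w.2 = u.2 + 1) ∨ (w.1 = u.1 - 1 ∧ w.2 = u.2) := by
  simp only [Step, Prod.ext_iff, Prod.fst_sub, Prod.snd_sub]
  omega


def seg (y a b : ℤ) : List (ℤ × ℤ) := (segZ a b).map (fun x => (x, y))

lemma seg_ne_nil (y a b : ℤ) : seg y a b ≠ [] := by
  simp [seg, segZ_ne_nil]

lemma head?_seg (y a b : ℤ) : (seg y a b).head? = some (a, y) := by
  simp [seg, List.head?_map, head?_segZ]

lemma getLast?_seg (y a b : ℤ) : (seg y a b).getLast? = some (b, y) := by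
  simp [seg, List.getLast?_map, getLast?_segZ]

lemma mem_seg {y a b : ℤ} {p : ℤ × ℤ} :
    p ∈ seg y a b ↔ p.2 = y ∧ ((a ≤ p.1 ∧ p.1 ≤ b) ∨ (b ≤ p.1 ∧ p.1 ≤ a)) := by
  simp only [seg, List.mem_map]
  constructor
  · rintro ⟨x, hx, rfl⟩; exact ⟨rfl, mem_segZ.mp hx⟩
  · rintro ⟨h2, h1⟩
    exact ⟨p.1, mem_segZ.mpr h1, by rw [← h2]⟩

lemma nodup_seg (y a b : ℤ) : (seg y a b).Nodup :=
  (nodup_segZ a b).map (fun x₁ x₂ h => by simpa using congrArg Prod.fst h)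

lemma chain'_seg (y a b : ℤ) : (seg y a b).Chain' Step := by
  rw [seg, List.Chain', List.isChain_map]
  exact (chain'_segZ a b).imp (fun s t h => step_iff.mpr
    (by rcases h with h|h ; exacts [Or.inl ⟨h, rfl⟩, Or.inr (Or.inr ⟨h, rfl⟩)]))

def build : List ℤ → ℤ → ℤ → List (ℤ × ℤ)
  | [], _, _ => []
  | c :: rest, y, a => seg y a c ++ build rest (y + 1) c

lemma head?_build (y a c : ℤ) (rest : List ℤ) :
    (build (c :: rest) y a).head? = some (a, y) := by
  rw [build, List.head?_append, head?_seg]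
  rfl

lemma build_ne_nil {L : List ℤ} (hL : L ≠ []) (y a : ℤ) : build L y a ≠ [] := by
  match L with
  | c :: rest =>
    rw [build]
    simp [seg_ne_nil]

lemma getLast?_build (L : List ℤ) : ∀ (y a c : ℤ),
    (build (L ++ [c]) y a).getLast? = some (c, y + L.length) := by
  induction L with
  | nil => intro y a c; simp [build, getLast?_seg]
  | cons d tl IH =>
    intro y a c
    rw [List.cons_append, build, List.getLast?_append_of_ne_nil, IH]
    · congr 1
      simp only [List.length_cons, Prod.mk.injEq]
      refine ⟨trivial, by push_cast; ring⟩
    · exact build_ne_nil (by simp) _ _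

lemma mem_build_snd {p : ℤ × ℤ} : ∀ (L : List ℤ) (y a : ℤ), p ∈ build L y a →
    y ≤ p.2 ∧ p.2 < y + L.length := by
  intro L
  induction L with
  | nil => intro y a h; simp [build] at h
  | cons c tl IH =>
    intro y a h
    rw [build, List.mem_append] at h
    rcases h with h | h
    · have := (mem_seg.mp h).1
      simp only [List.length_cons]
      constructor
      · omega
      · push_cast; omega
    · have h2 := IH (y+1) c h
      simp only [List.length_cons]
      constructor
      · omega
      · push_cast; omega


lemma nodup_build : ∀ (L : List ℤ) (y a : ℤ), (build L y a).Nodup := by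
  intro L
  induction L with
  | nil => intro y a; simp [build]
  | cons c tl IH =>
    intro y a
    rw [build, List.nodup_append]
    refine ⟨nodup_seg y a c, IH (y+1) c, ?_⟩
    intro p hp q hq hpq; subst hpq
    have h1 := (mem_seg.mp hp).1
    have h2 := (mem_build_snd tl (y+1) c hq).1
    omega

lemma chain'_build : ∀ (L : List ℤ) (y a : ℤ), (build L y a).Chain' Step := by
  intro L
  induction L with
  | nil => intro y a; simp [build]; exact List.isChain_nil
  | cons c tl IH =>
    intro y a
    rw [build, List.Chain', List.isChain_append]
    refine ⟨chain'_seg y a c, IH (y+1) c, ?_⟩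
    intro p hp q hq
    rw [getLast?_seg, Option.mem_def, Option.some_inj] at hp
    subst hp
    match tl, hq with
    | d :: tl', hq =>
      rw [head?_build, Option.mem_def, Option.some_inj] at hq
      subst hq
      exact step_iff.mpr (Or.inr (Or.inl ⟨rfl, rfl⟩))

lemma mem_build_bound : ∀ (L : List ℤ) (y a : ℤ), |a| ≤ y →
    (∀ i (h : i < L.length), |L.get ⟨i, h⟩| ≤ y + i) →
    ∀ p ∈ build L y a, |p.1| ≤ p.2 := by
  intro L
  induction L with
  | nil => intro y a _ _ p hp; simp [build] at hp
  | cons c tl IH =>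
    intro y a ha hL p hp
    rw [build, List.mem_append] at hp
    have hc : |c| ≤ y := by simpa using hL 0 (by simp)
    rcases hp with hp | hp
    · obtain ⟨h2, h1⟩ := mem_seg.mp hp
      rw [h2]
      rcases h1 with h | h <;> [skip; skip] <;>
        (rw [abs_le] at ha hc ⊢; omega)
    · exact IH (y+1) c (by omega)
        (fun i h => by simpa [add_comm, add_left_comm, add_assoc] using hL (i+1) (by simpa using h)) p hp

lemma get_mem_build : ∀ (L : List ℤ) (i : ℕ) (h : i < L.length) (y a : ℤ),
    (L.get ⟨i, h⟩, y + i) ∈ build L y a := by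
  intro L
  induction L with
  | nil => intro i h; simp at h
  | cons c tl IH =>
    intro i h y a
    rw [build, List.mem_append]
    match i with
    | 0 =>
      left
      rw [mem_seg]
      simp [le_total]
    | i + 1 =>
      right
      have := IH i (by simpa using h) (y+1) c
      simpa [add_assoc, add_comm, add_left_comm] using this


/-- helper: takeWhile over an append whose first part is all-true -/
lemma takeWhile_append_of_all {α : Type*} {p : α → Bool} : ∀ {l₁ l₂ : List α},
    (∀ x ∈ l₁, p x = true) → (l₁ ++ l₂).takeWhile p = l₁ ++ l₂.takeWhile p := by
  intro l₁
  induction l₁ with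
  | nil => intro l₂ _; simp
  | cons x t IH =>
    intro l₂ h
    rw [List.cons_append, List.takeWhile_cons_of_pos (h x (by simp)), IH (fun z hz => h z (by simp [hz]))]
    rfl

lemma dropWhile_append_of_all {α : Type*} {p : α → Bool} : ∀ {l₁ l₂ : List α},
    (∀ x ∈ l₁, p x = true) → (l₁ ++ l₂).dropWhile p = l₂.dropWhile p := by
  intro l₁
  induction l₁ with
  | nil => intro l₂ _; simp
  | cons x t IH =>
    intro l₂ h
    rw [List.cons_append, List.dropWhile_cons_of_pos (h x (by simp)), IH (fun z hz => h z (by simp [hz]))]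


lemma all_seg_snd (y a c : ℤ) : ∀ x ∈ seg y a c, decide (x.2 = y) = true := by
  intro x hx; simpa using (mem_seg.mp hx).1

lemma takeWhile_build (y a c : ℤ) (rest : List ℤ) :
    (build (c :: rest) y a).takeWhile (fun q => decide (q.2 = y)) = seg y a c := by
  rw [build, takeWhile_append_of_all (all_seg_snd y a c)]
  match rest with
  | [] => simp [build]
  | d :: r' =>
    obtain ⟨q0, q', hq⟩ := List.exists_cons_of_ne_nil (build_ne_nil (L := d :: r') (by simp) (y+1) c)
    have hq0 : q0 = (c, y + 1) := by
      have := head?_build (y+1) c d r'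
      rw [hq] at this
      simpa using this
    rw [hq, List.takeWhile_cons_of_neg, List.append_nil]
    rw [hq0]
    simp

lemma dropWhile_build (y a c : ℤ) (rest : List ℤ) :
    (build (c :: rest) y a).dropWhile (fun q => decide (q.2 = y)) = build rest (y+1) c := by
  rw [build, dropWhile_append_of_all (all_seg_snd y a c)]
  match rest with
  | [] => simp [build]
  | d :: r' =>
    obtain ⟨q0, q', hq⟩ := List.exists_cons_of_ne_nil (build_ne_nil (L := d :: r') (by simp) (y+1) c)
    have hq0 : q0 = (c, y + 1) := by
      have := head?_build (y+1) c d r'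
      rw [hq] at this
      simpa using this
    rw [hq, List.dropWhile_cons_of_neg]
    rw [hq0]
    simp

lemma build_inj : ∀ (L₁ L₂ : List ℤ) (y a : ℤ), build L₁ y a = build L₂ y a → L₁ = L₂ := by
  intro L₁
  induction L₁ with
  | nil =>
    intro L₂ y a h
    match L₂ with
    | [] => rfl
    | c :: r => exact absurd h.symm (by simpa [build] using build_ne_nil (L := c :: r) (by simp) y a)
  | cons c₁ r₁ IH =>
    intro L₂ y a h
    match L₂ with
    | [] => exact absurd h (by simpa [build] using build_ne_nil (L := c₁ :: r₁) (by simp) y a)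
    | c₂ :: r₂ =>
      have ht := congrArg (List.takeWhile (fun q => decide (q.2 = y))) h
      rw [takeWhile_build, takeWhile_build] at ht
      have hc : c₁ = c₂ := by
        have := congrArg List.getLast? ht
        rw [getLast?_seg, getLast?_seg] at this
        simpa [Prod.ext_iff] using this
      subst hc
      have hd := congrArg (List.dropWhile (fun q => decide (q.2 = y))) h
      rw [dropWhile_build, dropWhile_build] at hd
      rw [IH r₂ (y+1) c₁ hd]


lemma dropWhile_cons_false {α : Type*} {p : α → Bool} : ∀ {l : List α} {q0 : α} {q' : List α},
    l.dropWhile p = q0 :: q' → p q0 = false := by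
  intro l
  induction l with
  | nil => intro q0 q' h; simp at h
  | cons x t IH =>
    intro q0 q' h
    by_cases hx : p x = true
    · rw [List.dropWhile_cons_of_pos hx] at h; exact IH h
    · rw [List.dropWhile_cons_of_neg hx] at h
      cases h; simpa using hx

lemma chain'_fst_of_snd_eq {y : ℤ} : ∀ {l : List (ℤ × ℤ)}, (∀ x ∈ l, x.2 = y) →
    l.Chain' Step → (l.map Prod.fst).Chain' (fun s t => t = s + 1 ∨ t = s - 1) := by
  intro l
  induction l with
  | nil => intro _ _; simp; exact List.isChain_nil
  | cons x t IH =>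
    intro hall hc
    match t with
    | [] => simp; exact List.isChain_singleton _
    | z :: t' =>
      rw [List.map_cons, List.map_cons, List.Chain', List.isChain_cons_cons]
      rw [List.map_cons] at IH
      constructor
      · have h1 := step_iff.mp (List.isChain_cons_cons.mp hc).1
        have h2 := hall x (by simp)
        have h3 := hall z (by simp)
        omega
      · exact IH (fun w hw => hall w (by simp [hw])) (List.isChain_cons_cons.mp hc).2

lemma exists_build_aux : ∀ (m : ℕ) (v : List (ℤ × ℤ)), v.length ≤ m → v.Chain' Step →
    v.Nodup → ∀ a y, v.head? = some (a, y) → ∃ L, L ≠ [] ∧ v = build L y a := by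
  intro m
  induction m with
  | zero =>
    intro v hlen _ _ a y hh
    match v with
    | [] => simp at hh
    | x :: t => simp at hlen
  | succ m IH =>
    intro v hlen hchain hnodup a y hh
    obtain ⟨v0, tl, rfl⟩ := List.exists_cons_of_ne_nil (by rintro rfl; simp at hh : v ≠ [])
    have hv0 : v0 = (a, y) := by simpa using hh
    have hsplit : (v0 :: tl).takeWhile (fun q => decide (q.2 = y)) ++
        (v0 :: tl).dropWhile (fun q => decide (q.2 = y)) = v0 :: tl :=
      List.takeWhile_append_dropWhile
    have hpcons : (v0 :: tl).takeWhile (fun q => decide (q.2 = y)) =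
        v0 :: tl.takeWhile (fun q => decide (q.2 = y)) := by
      rw [List.takeWhile_cons_of_pos]
      rw [hv0]; simp
    generalize hP : (v0 :: tl).takeWhile (fun q => decide (q.2 = y)) = p at hsplit hpcons
    generalize hQ : (v0 :: tl).dropWhile (fun q => decide (q.2 = y)) = q at hsplit
    have hpne : p ≠ [] := by rw [hpcons]; simp
    have hall : ∀ x ∈ p, x.2 = y := by
      intro x hx
      have := List.mem_takeWhile_imp (hP ▸ hx)
      simpa using this
    have hpchain : p.Chain' Step := hchain.prefix (hP ▸ List.takeWhile_prefix _)
    have hpnodup : p.Nodup := hnodup.sublist (hP ▸ List.takeWhile_prefix _).sublist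
    have hfchain := chain'_fst_of_snd_eq hall hpchain
    have hfnodup : (p.map Prod.fst).Nodup := by
      refine hpnodup.map_on ?_
      intro x hx z hz hxz
      have := (hall x hx).trans (hall z hz).symm
      cases x; cases z
      simp_all
    have hfhead : (p.map Prod.fst).head? = some a := by
      rw [List.head?_map, hpcons]
      simp [hv0]
    obtain ⟨c, hc⟩ := walk_eq_segZ _ hfchain hfnodup a hfhead
    have hpseg : p = seg y a c := by
      have h1 : p.map (fun w => (w.1, y)) = p := by
        conv_rhs => rw [← List.map_id p]
        exact List.map_congr_left (fun x hx => by
          have := hall x hx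
          cases x
          simp_all)
      calc p = (p.map Prod.fst).map (fun x => (x, y)) := by
                rw [List.map_map]; exact h1.symm
        _ = seg y a c := by rw [hc]; rfl
    match hq : q with
    | [] =>
      refine ⟨[c], by simp, ?_⟩
      rw [List.append_nil] at hsplit
      rw [← hsplit, hpseg]
      simp [build]
    | q0 :: q' =>
      have hq0f := dropWhile_cons_false hQ
      have hjun : Step (c, y) q0 := by
        have h2 := hchain
        rw [← hsplit, List.Chain', List.isChain_append] at h2
        refine h2.2.2 (c, y) ?_ q0 ?_
        · rw [hpseg, getLast?_seg]; rfl
        · rfl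
      have hq0 : q0 = (c, y + 1) := by
        have h1 := step_iff.mp hjun
        have h2 : ¬ (q0.2 = y) := by simpa using hq0f
        have h3 : q0.1 = c ∧ q0.2 = y + 1 := by
          simp only at h1
          omega
        cases q0
        simp_all
      have hqlen : (q0 :: q').length ≤ m := by
        have h1 := congrArg List.length hsplit
        have h2 : 1 ≤ p.length := by rw [hpcons]; simp
        simp only [List.length_append, List.length_cons] at h1 hlen ⊢
        omega
      have hqchain : (q0 :: q').Chain' Step := hchain.suffix (hQ ▸ List.dropWhile_suffix _)
      have hqnodup : (q0 :: q').Nodup := hnodup.sublist (hQ ▸ List.dropWhile_suffix _).sublist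
      have hqhead : (q0 :: q').head? = some (c, y + 1) := by rw [hq0]; rfl
      obtain ⟨L', hL'ne, hL'⟩ := IH (q0 :: q') hqlen hqchain hqnodup c (y + 1) hqhead
      refine ⟨c :: L', by simp, ?_⟩
      rw [← hsplit, hpseg, hL', build]

/-- the target function on `Fin (n+1)` built from the free middle values -/
def tg (n : ℕ) (f : Fin (n - 1) → ℤ) (j : Fin (n + 1)) : ℤ :=
  if hn : (j : ℕ) = n then (n : ℤ)
  else if h : 0 < (j : ℕ) then f ⟨(j : ℕ) - 1, by have := j.isLt; omega⟩
  else 0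

def Phi (n : ℕ) (f : Fin (n - 1) → ℤ) : List (ℤ × ℤ) :=
  build (List.ofFn (tg n f)) 0 0

lemma tg_bound {n : ℕ} {f : Fin (n - 1) → ℤ} (hf : ∀ i, |f i| ≤ (i : ℤ) + 1)
    (j : Fin (n + 1)) : |tg n f j| ≤ (j : ℕ) := by
  unfold tg
  split
  · rename_i h; rw [h]; simp
  · rename_i h1
    split
    · rename_i h2
      exact (hf _).trans (by push_cast; omega)
    · simp

lemma Phi_isOPath {n : ℕ} {f : Fin (n - 1) → ℤ} (hf : ∀ i, |f i| ≤ (i : ℤ) + 1) :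
    IsOPath n (Phi n f) := by
  refine ⟨?_, ?_, ?_, ?_, ?_⟩
  · rw [Phi, List.ofFn_succ, head?_build]
  · rw [Phi, List.ofFn_succ' (tg n f), List.concat_eq_append, getLast?_build]
    have h1 : tg n f (Fin.last n) = (n : ℤ) := by simp [tg]
    simp [h1]
  · exact nodup_build _ _ _
  · intro p hp
    have := mem_build_bound (List.ofFn (tg n f)) 0 0 (by simp) ?_ p hp
    · rw [abs_le] at this; exact ⟨this.2, this.1⟩
    · intro i h
      rw [List.get_ofFn]
      have := tg_bound hf (Fin.cast (by simp) ⟨i, h⟩)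
      simpa using this
  · exact chain'_build _ _ _

lemma Phi_inj {n : ℕ} {f₁ f₂ : Fin (n - 1) → ℤ} (h : Phi n f₁ = Phi n f₂) : f₁ = f₂ := by
  have h2 := build_inj _ _ _ _ h
  have h4 : tg n f₁ = tg n f₂ := List.ofFn_injective h2
  funext i
  have h3 := congrFun h4 ⟨(i : ℕ) + 1, by have := i.isLt; omega⟩
  have hne : ¬ (((i : ℕ) + 1 : ℕ) = n) := by have := i.isLt; omega
  have hpos : 0 < ((i : ℕ) + 1 : ℕ) := by omega
  simp only [tg, hne, dif_neg, dif_pos hpos, not_false_iff] at h3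
  simpa using h3

lemma Phi_surj {n : ℕ} {v : List (ℤ × ℤ)} (hv : IsOPath n v) :
    ∃ f : Fin (n - 1) → ℤ, (∀ i, |f i| ≤ (i : ℤ) + 1) ∧ Phi n f = v := by
  obtain ⟨hh, hl, hnd, hreg, hch⟩ := hv
  obtain ⟨L, hLne, hLv⟩ := exists_build_aux v.length v le_rfl hch hnd 0 0 hh
  have habs : ∀ i (h : i < L.length), |L.get ⟨i, h⟩| ≤ (i : ℤ) := by
    intro i h
    have hmem := get_mem_build L i h 0 0
    rw [← hLv] at hmem
    have := hreg _ hmem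
    simp only [zero_add] at this
    rw [abs_le]
    exact ⟨this.2, this.1⟩
  rcases L.eq_nil_or_concat' with rfl | ⟨L', c, rfl⟩
  · exact absurd rfl hLne
  · have hlast : c = (n : ℤ) ∧ (L'.length : ℤ) = (n : ℤ) := by
      have := getLast?_build L' 0 0 c
      rw [← hLv, hl] at this
      have h2 := Option.some_inj.mp this
      rw [Prod.ext_iff] at h2
      simp only at h2
      exact ⟨h2.1.symm, by have := h2.2; omega⟩
    have hlen : L'.length = n := by have := hlast.2; omega
    have hLlen : (L' ++ [c]).length = n + 1 := by simp [hlen]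
    refine ⟨fun i => (L' ++ [c]).get ⟨(i : ℕ) + 1, by omega⟩, ?_, ?_⟩
    · intro i
      exact (habs ((i : ℕ) + 1) (by have := i.isLt; omega)).trans (by push_cast; omega)
    · rw [Phi, hLv]
      congr 1
      refine List.ext_get (by simp [hLlen]) ?_
      intro j h₁ h₂
      rw [List.get_ofFn]
      simp only [tg, Fin.coe_cast]
      split
      · rename_i hj
        -- j = n : last entry equals c = n
        have : (L' ++ [c]).get ⟨j, h₂⟩ = c := by
          have hj' : j = L'.length := by omega
          subst hj'
          simp [List.getElem_append_right]
        rw [this, hlast.1]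
      · split
        · rename_i hj hpos
          congr 1
          simp only [Fin.mk.injEq]
          omega
        · rename_i hj hpos
          have hj0 : j = 0 := by omega
          subst hj0
          have h3 := habs 0 h₂
          have h5 := abs_le.mp h3
          have h6 : (L' ++ [c]).get ⟨0, h₂⟩ = 0 := by
            simp only [Nat.cast_zero] at h5
            omega
          rw [h6]


lemma card_int_abs_le (c : ℤ) (hc : 0 ≤ c) :
    Nat.card {x : ℤ // |x| ≤ c} = (2 * c + 1).toNat := by
  have e : {x : ℤ // |x| ≤ c} ≃ {x : ℤ // x ∈ Finset.Icc (-c) c} :=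
    Equiv.subtypeEquivRight (by intro x; rw [Finset.mem_Icc, abs_le])
  rw [Nat.card_congr e, Nat.card_eq_fintype_card, Fintype.card_coe, Int.card_Icc]
  congr 1
  ring

end OPathAux


open OPathAux in
theorem card_OPaths (n : ℕ) :
    Nat.card {v : List (ℤ × ℤ) // IsOPath n v} =
      ∏ i ∈ Finset.Icc 1 n, (2 * i - 1) := by
  classical
  have hbij : Function.Bijective
      (fun f : {f : Fin (n - 1) → ℤ // ∀ i, |f i| ≤ (i : ℤ) + 1} =>
        (⟨Phi n f.1, Phi_isOPath f.2⟩ : {v : List (ℤ × ℤ) // IsOPath n v})) := by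
    constructor
    · intro f₁ f₂ h
      exact Subtype.ext (Phi_inj (congrArg Subtype.val h))
    · intro v
      obtain ⟨f, hf, hfv⟩ := Phi_surj v.2
      exact ⟨⟨f, hf⟩, Subtype.ext hfv⟩
  rw [← Nat.card_eq_of_bijective _ hbij]
  rw [Nat.card_congr (Equiv.subtypePiEquivPi
      (p := fun (i : Fin (n - 1)) (x : ℤ) => |x| ≤ (i : ℤ) + 1)), Nat.card_pi]
  have hfac : ∀ i : Fin (n - 1), Nat.card {x : ℤ // |x| ≤ (i : ℤ) + 1} = 2 * (i : ℕ) + 3 := by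
    intro i
    rw [card_int_abs_le _ (by positivity)]
    omega
  rw [Finset.prod_congr rfl (fun i _ => hfac i)]
  -- now pure arithmetic
  rw [Fin.prod_univ_eq_prod_range (fun i => 2 * i + 3) (n - 1)]
  rw [← Finset.Ico_add_one_right_eq_Icc, Finset.prod_Ico_eq_prod_range]
  match n with
  | 0 => simp
  | m + 1 =>
    have hmm : m + 1 + 1 - 1 = m + 1 := rfl
    rw [hmm, Finset.prod_range_succ' (fun i => 2 * (1 + i) - 1) m]
    simp only [Nat.add_sub_cancel]
    have h1 : ∀ i, 2 * (1 + (i + 1)) - 1 = 2 * i + 3 := by intro i; omega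
    rw [Finset.prod_congr rfl (fun i _ => h1 i)]
    simp
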